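/- arXiv:1210.5561 — 4 statements merged into one kernel-verified Lean document; each statement's English description precedes it below -/
import Mathlib

section
/- The number of edges of the Hasse diagram of the poset of independent subsets of the h-th power of a path on n vertices, ordered by inclusion, equals the sum over k ≥ 1 of k * C(n - h*k + h, k). -/
/-- Independent subsets of the h-th power of the path on n vertices:
subsets of {1,...,n} with all pairwise differences of distinct elements greater than h. -/
def pathSubsets (n h : ℕ) : Finset (Finset ℕ) :=
  (Finset.Icc 1 n).powerset.filter (fun S => ∀ i ∈ S, ∀ j ∈ S, i < j → i + h < j)

def pathCount (n h k : ℕ) : ℕ := ((pathSubsets n h).filter (fun S => S.card = k)).card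

def pathTotal (n h : ℕ) : ℕ := (pathSubsets n h).card

/-- Independent subsets of the h-th power of the cycle on n vertices:
subsets S of {1,...,n} with h < |i-j| < n-h for all distinct i,j ∈ S. -/
def cycleSubsets (n h : ℕ) : Finset (Finset ℕ) :=
  (Finset.Icc 1 n).powerset.filter
    (fun S => ∀ i ∈ S, ∀ j ∈ S, i < j → i + h < j ∧ j + h < n + i)

def cycleCount (n h k : ℕ) : ℕ := ((cycleSubsets n h).filter (fun S => S.card = k)).card

def cycleTotal (n h : ℕ) : ℕ := (cycleSubsets n h).card

/-- Number of edges of the Hasse diagram of independent subsets of Pₙ⁽ʰ⁾ ordered by inclusion. -/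
def pathEdges (n h : ℕ) : ℕ :=
  (((pathSubsets n h) ×ˢ (pathSubsets n h)).filter
    (fun p => p.1 ⊆ p.2 ∧ p.2.card = p.1.card + 1)).card

/-- Number of edges of the Hasse diagram of independent subsets of Cₙ⁽ʰ⁾ ordered by inclusion. -/
def cycleEdges (n h : ℕ) : ℕ :=
  (((cycleSubsets n h) ×ˢ (cycleSubsets n h)).filter
    (fun p => p.1 ⊆ p.2 ∧ p.2.card = p.1.card + 1)).card

lemma mem_pathSubsets {n h : ℕ} {S : Finset ℕ} :
    S ∈ pathSubsets n h ↔ (∀ x ∈ S, 1 ≤ x ∧ x ≤ n) ∧ ∀ i ∈ S, ∀ j ∈ S, i < j → i + h < j := by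
  simp [pathSubsets, Finset.subset_iff, Finset.mem_Icc, forall_and]

lemma pathCount_zero (h k : ℕ) (hk : 1 ≤ k) : pathCount 0 h k = 0 := by
  unfold pathCount
  rw [Finset.card_eq_zero, Finset.filter_eq_empty_iff]
  intro S hS
  rw [mem_pathSubsets] at hS
  have : S = ∅ := by
    rw [Finset.eq_empty_iff_forall_notMem]
    intro x hx
    have := hS.1 x hx
    omega
  simp [this]
  omega

lemma pathSubsets_notMem (n h : ℕ) (hn : 1 ≤ n) {S : Finset ℕ} :
    (S ∈ pathSubsets n h ∧ n ∉ S) ↔ S ∈ pathSubsets (n-1) h := by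
  rw [mem_pathSubsets, mem_pathSubsets]
  constructor
  · rintro ⟨⟨h1, h2⟩, h3⟩
    refine ⟨fun x hx => ?_, h2⟩
    have := h1 x hx
    have : x ≠ n := fun he => h3 (he ▸ hx)
    omega
  · rintro ⟨h1, h2⟩
    refine ⟨⟨fun x hx => by have := h1 x hx; omega, h2⟩, fun hn' => by have := h1 n hn'; omega⟩

lemma pathCount_rec (n h k : ℕ) (hn : 1 ≤ n) (hk : 1 ≤ k) :
    pathCount n h k = pathCount (n-1) h k + pathCount (n-h-1) h (k-1) := by
  unfold pathCount
  have split := Finset.card_filter_add_card_filter_not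
    (s := (pathSubsets n h).filter (fun S => S.card = k)) (p := fun S => n ∉ S)
  rw [← split]; clear split
  congr 1
  · -- sets not containing n
    congr 1
    ext S
    simp only [Finset.mem_filter]
    have := pathSubsets_notMem (S := S) n h hn
    tauto
  · -- sets containing n: bijection via erase
    refine Finset.card_bij' (fun S _ => S.erase n) (fun S _ => insert n S) ?_ ?_ ?_ ?_
    · -- maps to
      intro S hS
      simp only [Finset.mem_filter, not_not] at hS
      obtain ⟨⟨hSm, hcard⟩, hnS⟩ := hS
      rw [mem_pathSubsets] at hSm
      obtain ⟨hbd, hind⟩ := hSm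
      simp only [Finset.mem_filter]
      refine ⟨mem_pathSubsets.2 ⟨?_, ?_⟩, ?_⟩
      · intro x hx
        rw [Finset.mem_erase] at hx
        have hb := hbd x hx.2
        have : x < n := lt_of_le_of_ne hb.2 hx.1
        have := hind x hx.2 n hnS this
        omega
      · intro i hi j hj hij
        exact hind i (Finset.mem_of_mem_erase hi) j (Finset.mem_of_mem_erase hj) hij
      · rw [Finset.card_erase_of_mem hnS, hcard]
    · -- j maps to
      intro S hS
      simp only [Finset.mem_filter] at hS
      obtain ⟨hSm, hcard⟩ := hS
      rw [mem_pathSubsets] at hSm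
      obtain ⟨hbd, hind⟩ := hSm
      have hnS : n ∉ S := fun hmem => by have := hbd n hmem; omega
      simp only [Finset.mem_filter, not_not]
      refine ⟨⟨mem_pathSubsets.2 ⟨?_, ?_⟩, ?_⟩, Finset.mem_insert_self n S⟩
      · intro x hx
        rcases Finset.mem_insert.1 hx with hx' | hx'
        · omega
        · have := hbd x hx'; omega
      · intro i hi j hj hij
        rcases Finset.mem_insert.1 hi with hi' | hi'
        · rcases Finset.mem_insert.1 hj with hj' | hj'
          · omega
          · have := hbd j hj'; omega
        · rcases Finset.mem_insert.1 hj with hj' | hj'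
          · have := hbd i hi'; omega
          · exact hind i hi' j hj' hij
      · rw [Finset.card_insert_of_notMem hnS, hcard]; omega
    · -- left inverse
      intro S hS
      simp only [Finset.mem_filter, not_not] at hS
      exact Finset.insert_erase hS.2
    · -- right inverse
      intro S hS
      simp only [Finset.mem_filter] at hS
      obtain ⟨hSm, _⟩ := hS
      rw [mem_pathSubsets] at hSm
      have hnS : n ∉ S := fun hmem => by have := hSm.1 n hmem; omega
      exact Finset.erase_insert hnS

lemma pathCount_k_zero (n h : ℕ) : pathCount n h 0 = 1 := by
  unfold pathCount
  convert Finset.card_singleton (∅ : Finset ℕ)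
  ext S
  simp only [Finset.mem_filter, Finset.card_eq_zero, Finset.mem_singleton, mem_pathSubsets]
  constructor
  · exact fun h => h.2
  · rintro rfl; simp

lemma pathCount_eq_choose (h : ℕ) : ∀ n, ∀ k, pathCount n h k = (n + h - h*k).choose k := by
  intro n
  induction n using Nat.strong_induction_on with
  | _ n IH =>
    intro k
    rcases Nat.eq_zero_or_pos k with rfl | hk
    · simp [pathCount_k_zero]
    rcases Nat.eq_zero_or_pos n with rfl | hn
    · rw [pathCount_zero h k hk]
      have : 0 + h - h * k = 0 := by
        have : h * 1 ≤ h * k := Nat.mul_le_mul_left h hk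
        omega
      rw [this, Nat.choose_eq_zero_of_lt hk]
    · rw [pathCount_rec n h k hn hk, IH (n-1) (by omega) k, IH (n-h-1) (by omega) (k-1)]
      obtain ⟨k', rfl⟩ : ∃ k', k = k' + 1 := ⟨k - 1, by omega⟩
      have hqe : h * (k' + 1) = h * k' + h := by ring
      rw [hqe]
      simp only [Nat.add_sub_cancel]
      set p := h * k' with hp
      rcases Nat.eq_zero_or_pos k' with rfl | hk'
      · simp only [Nat.mul_zero] at hp
        rw [hp]
        rw [Nat.choose_one_right, Nat.choose_one_right, Nat.choose_zero_right]
        omega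
      · have hhp : h ≤ p := Nat.le_mul_of_pos_right h hk'
        by_cases hA : n ≤ p
        · have e0 : n + h - (p + h) = 0 := by omega
          have e1 : n - 1 + h - (p + h) = 0 := by omega
          have e2 : n - h - 1 + h - p = 0 := by omega
          rw [e0, e1, e2, Nat.choose_eq_zero_of_lt (by omega : 0 < k'+1),
            Nat.choose_eq_zero_of_lt (by omega : 0 < k')]
        · have e0 : n + h - (p + h) = (n - 1 - p) + 1 := by omega
          have e1 : n - 1 + h - (p + h) = n - 1 - p := by omega
          have e2 : n - h - 1 + h - p = n - 1 - p := by omega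
          rw [e0, e1, e2, Nat.choose_succ_succ]
          simp only [Nat.succ_eq_add_one]
          omega

lemma pathEdges_eq_sum (n h : ℕ) : pathEdges n h = ∑ T ∈ pathSubsets n h, T.card := by
  unfold pathEdges
  rw [Finset.card_filter, Finset.sum_product, Finset.sum_comm]
  refine Finset.sum_congr rfl fun T hT => ?_
  rw [← Finset.card_filter]
  rcases Nat.eq_zero_or_pos T.card with h0 | hpos
  · rw [h0, Finset.card_eq_zero, Finset.filter_eq_empty_iff]
    rintro S _ ⟨_, hc⟩
    dsimp only at hc
    omega
  · have heq : (pathSubsets n h).filter (fun S => S ⊆ T ∧ T.card = S.card + 1)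
        = T.powersetCard (T.card - 1) := by
      ext S
      simp only [Finset.mem_filter, Finset.mem_powersetCard]
      constructor
      · rintro ⟨_, hsub, hc⟩; exact ⟨hsub, by omega⟩
      · rintro ⟨hsub, hc⟩
        refine ⟨?_, hsub, by omega⟩
        rw [mem_pathSubsets] at hT ⊢
        exact ⟨fun x hx => hT.1 x (hsub hx), fun i hi j hj => hT.2 i (hsub hi) j (hsub hj)⟩
    rw [heq, Finset.card_powersetCard, Nat.choose_symm hpos, Nat.choose_one_right]

theorem stmt6 (n h : ℕ) :
    pathEdges n h = ∑ k ∈ Finset.Icc 1 n, k * Nat.choose (n + h - h * k) k := by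
  rw [pathEdges_eq_sum]
  have hmap : ∀ T ∈ pathSubsets n h, T.card ∈ Finset.range (n+1) := by
    intro T hT
    rw [Finset.mem_range]
    have hsub : T ⊆ Finset.Icc 1 n :=
      fun x hx => Finset.mem_Icc.2 ((mem_pathSubsets.1 hT).1 x hx)
    have := Finset.card_le_card hsub
    simp [Nat.card_Icc] at this
    omega
  rw [← Finset.sum_fiberwise_of_maps_to hmap Finset.card]
  have step : ∀ k ∈ Finset.range (n+1),
      (∑ T ∈ (pathSubsets n h).filter (fun T => T.card = k), T.card)
        = k * (n + h - h*k).choose k := by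
    intro k _
    rw [Finset.sum_congr rfl (fun T hT => (Finset.mem_filter.1 hT).2),
      Finset.sum_const, smul_eq_mul, ← pathCount_eq_choose, mul_comm]
    rfl
  rw [Finset.sum_congr rfl step]
  refine (Finset.sum_subset ?_ ?_).symm
  · intro x hx
    rw [Finset.mem_Icc] at hx
    rw [Finset.mem_range]
    omega
  · intro x hx1 hx
    rw [Finset.mem_range] at hx1
    rw [Finset.mem_Icc] at hx
    have : x = 0 := by omega
    simp [this]
end

section
/- Define the h-Fibonacci sequence by F^(h)_n = 1 for 1 ≤ n ≤ h+1 and F^(h)_n = F^(h)_{n-1} + F^(h)_{n-h-1} for n > h+1. Then the number of edges of the Hasse diagram of the independent subsets of the h-th power of a path on n vertices, ordered by inclusion, equals the convolution sum Σ_{i=1}^{n} F^(h)_i * F^(h)_{n-i+1}. -/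
lemma mem_PS {n h : ℕ} {S : Finset ℕ} :
    S ∈ pathSubsets n h ↔ S ⊆ Finset.Icc 1 n ∧ ∀ i ∈ S, ∀ j ∈ S, i < j → i + h < j := by
  simp [pathSubsets]

lemma PS_down {n h : ℕ} {S T : Finset ℕ} (hST : S ⊆ T) (hT : T ∈ pathSubsets n h) :
    S ∈ pathSubsets n h := by
  rw [mem_PS] at *
  exact ⟨hST.trans hT.1, fun i hi j hj => hT.2 i (hST hi) j (hST hj)⟩

lemma sum_split {n h : ℕ} (hn : 1 ≤ n) (f : Finset ℕ → ℕ) :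
    ∑ T ∈ pathSubsets n h, f T =
      ∑ T ∈ pathSubsets (n-1) h, f T + ∑ T ∈ pathSubsets (n-h-1) h, f (insert n T) := by
  rw [← Finset.sum_filter_add_sum_filter_not (pathSubsets n h) (fun T => n ∉ T)]
  congr 1
  · congr 1
    ext T
    simp only [Finset.mem_filter, mem_PS]
    constructor
    · rintro ⟨⟨hsub, hind⟩, hnT⟩
      refine ⟨fun x hx => ?_, hind⟩
      have := hsub hx
      simp only [Finset.mem_Icc] at this ⊢
      have : x ≠ n := fun e => hnT (e ▸ hx)
      have := hsub hx
      simp only [Finset.mem_Icc] at this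
      omega
    · rintro ⟨hsub, hind⟩
      refine ⟨⟨fun x hx => ?_, hind⟩, fun hnT => ?_⟩
      · have := hsub hx; simp only [Finset.mem_Icc] at this ⊢; omega
      · have := hsub hnT; simp only [Finset.mem_Icc] at this; omega
  · have himg : Finset.filter (fun T => ¬ n ∉ T) (pathSubsets n h)
        = (pathSubsets (n-h-1) h).image (insert n) := ?img
    rw [himg, Finset.sum_image ?inj]
    case inj =>
      intro S hS S' hS' he
      have hnS : n ∉ S := by
        intro hn'
        have := (mem_PS.mp hS).1 hn'
        simp only [Finset.mem_Icc] at this; omega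
      have hnS' : n ∉ S' := by
        intro hn'
        have := (mem_PS.mp hS').1 hn'
        simp only [Finset.mem_Icc] at this; omega
      have := congrArg (Finset.erase · n) he
      simpa [Finset.erase_insert hnS, Finset.erase_insert hnS'] using this
    case img =>
    ext T
    simp only [Finset.mem_filter, Finset.mem_image, mem_PS, not_not]
    constructor
    · rintro ⟨⟨hsub, hind⟩, hnT⟩
      refine ⟨T.erase n, ⟨fun x hx => ?_, fun i hi j hj => hind i (Finset.mem_of_mem_erase hi) j (Finset.mem_of_mem_erase hj)⟩, by simp [Finset.insert_erase hnT]⟩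
      have hxT := Finset.mem_of_mem_erase hx
      have hxn : x ≠ n := Finset.ne_of_mem_erase hx
      have h1 := hsub hxT
      simp only [Finset.mem_Icc] at h1 ⊢
      have hlt : x < n := lt_of_le_of_ne h1.2 hxn
      have := hind x hxT n hnT hlt
      omega
    · rintro ⟨S, ⟨hsub, hind⟩, rfl⟩
      have hSn : ∀ x ∈ S, x + h < n ∧ 1 ≤ x := by
        intro x hx
        have := hsub hx; simp only [Finset.mem_Icc] at this; omega
      refine ⟨⟨fun x hx => ?_, fun i hi j hj hij => ?_⟩, Finset.mem_insert_self n S⟩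
      · rcases Finset.mem_insert.mp hx with rfl | hx
        · simp only [Finset.mem_Icc]; omega
        · have := hSn x hx; simp only [Finset.mem_Icc]; omega
      · rcases Finset.mem_insert.mp hi with hi' | hi'
        · rcases Finset.mem_insert.mp hj with hj' | hj'
          · omega
          · have := hSn j hj'; omega
        · rcases Finset.mem_insert.mp hj with hj' | hj'
          · have := hSn i hi'; omega
          · exact hind i hi' j hj' hij

lemma PS_zero {h : ℕ} : pathSubsets 0 h = {∅} := by
  ext S
  simp only [mem_PS, Finset.mem_singleton]
  constructor
  · rintro ⟨hsub, -⟩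
    simpa using Finset.subset_empty.mp (by simpa using hsub)
  · rintro rfl; simp

def A (h m : ℕ) : ℕ := (pathSubsets m h).card

def E (h m : ℕ) : ℕ := ∑ T ∈ pathSubsets m h, T.card

lemma A_zero {h : ℕ} : A h 0 = 1 := by simp [A, PS_zero]

lemma E_zero {h : ℕ} : E h 0 = 0 := by simp [E, PS_zero]

lemma notMem_PS_top {n h : ℕ} (hn : 1 ≤ n) {T : Finset ℕ}
    (hT : T ∈ pathSubsets (n-h-1) h) : n ∉ T := by
  intro hmem
  have := (mem_PS.mp hT).1 hmem
  simp only [Finset.mem_Icc] at this; omega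

lemma A_rec {n h : ℕ} (hn : 1 ≤ n) : A h n = A h (n-1) + A h (n-h-1) := by
  have := sum_split (h := h) hn (fun _ => 1)
  simp only [A, Finset.card_eq_sum_ones]
  exact this

lemma E_rec {n h : ℕ} (hn : 1 ≤ n) :
    E h n = E h (n-1) + (E h (n-h-1) + A h (n-h-1)) := by
  have := sum_split (h := h) hn (fun T => T.card)
  rw [E, this]
  congr 1
  rw [E, A, Finset.card_eq_sum_ones, ← Finset.sum_add_distrib]
  exact Finset.sum_congr rfl fun T hT => by
    rw [Finset.card_insert_of_notMem (notMem_PS_top hn hT)]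

lemma A_eq_F {h : ℕ} (F : ℕ → ℕ)
    (hF1 : ∀ m, 1 ≤ m → m ≤ h + 1 → F m = 1)
    (hFrec : ∀ m, m > h + 1 → F m = F (m - 1) + F (m - h - 1)) :
    ∀ m, A h m = F (m + h + 1) := by
  intro m
  induction m using Nat.strong_induction_on with
  | _ m ih =>
    rcases Nat.eq_zero_or_pos m with rfl | hm
    · rw [A_zero, hF1 (0 + h + 1) (by omega) (by omega)]
    · rw [A_rec hm, hFrec (m + h + 1) (by omega)]
      congr 1
      · rw [ih (m-1) (by omega)]; congr 1; omega
      · rcases le_or_gt m (h+1) with hle | hlt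
        · have : m - h - 1 = 0 := by omega
          rw [this, A_zero, hF1 (m + h + 1 - h - 1) (by omega) (by omega)]
        · rw [ih (m - h - 1) (by omega)]; congr 1; omega

lemma pathEdges_eq_E (n h : ℕ) : pathEdges n h = E h n := by
  rw [pathEdges, Finset.card_filter, Finset.sum_product, Finset.sum_comm, E]
  refine Finset.sum_congr rfl fun T hT => ?_
  have key : (pathSubsets n h).filter (fun S => S ⊆ T ∧ T.card = S.card + 1)
      = T.image (fun x => T.erase x) := by
    ext S
    simp only [Finset.mem_filter, Finset.mem_image]
    constructor
    · rintro ⟨hS, hsub, hcard⟩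
      have hcd : (T \ S).card = 1 := by
        rw [Finset.card_sdiff_of_subset hsub]; omega
      obtain ⟨x, hx⟩ := Finset.card_eq_one.mp hcd
      have hxT : x ∈ T := by
        have : x ∈ T \ S := hx ▸ Finset.mem_singleton_self x
        exact (Finset.mem_sdiff.mp this).1
      have hxS : x ∉ S := by
        have : x ∈ T \ S := hx ▸ Finset.mem_singleton_self x
        exact (Finset.mem_sdiff.mp this).2
      refine ⟨x, hxT, ?_⟩
      have hsub2 : S ⊆ T.erase x := fun y hy =>
        Finset.mem_erase.mpr ⟨fun e => hxS (e ▸ hy), hsub hy⟩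
      exact (Finset.eq_of_subset_of_card_le hsub2
        (by rw [Finset.card_erase_of_mem hxT]; omega)).symm
    · rintro ⟨x, hxT, rfl⟩
      have hTcard : 1 ≤ T.card := Finset.card_pos.mpr ⟨x, hxT⟩
      refine ⟨PS_down (Finset.erase_subset x T) hT, Finset.erase_subset x T, ?_⟩
      rw [Finset.card_erase_of_mem hxT]; omega
  rw [← Finset.card_filter, key]
  exact Finset.card_image_of_injOn (fun x hx y hy hxy => by
    by_contra hne
    have h1 : x ∈ T.erase y := Finset.mem_erase.mpr ⟨hne, hx⟩
    rw [← hxy] at h1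
    exact (Finset.mem_erase.mp h1).1 rfl)


theorem stmt10 (n h : ℕ) (F : ℕ → ℕ)
    (hF1 : ∀ m, 1 ≤ m → m ≤ h + 1 → F m = 1)
    (hFrec : ∀ m, m > h + 1 → F m = F (m - 1) + F (m - h - 1)) :
    pathEdges n h = ∑ i ∈ Finset.Icc 1 n, F i * F (n - i + 1) := by
  rw [pathEdges_eq_E]
  induction n using Nat.strong_induction_on with
  | _ n ih =>
    rcases Nat.eq_zero_or_pos n with rfl | hn
    · simp [E_zero]
    · rw [E_rec hn, ih (n-1) (by omega), ih (n-h-1) (by omega),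
        A_eq_F F hF1 hFrec]
      have hFn : F (n - h - 1 + h + 1) = F n := by
        rcases le_or_gt n (h+1) with hle | hlt
        · rw [hF1 _ (by omega) (by omega), hF1 n hn hle]
        · congr 1; omega
      rw [hFn]
      -- RHS manipulation
      have hsplit : ∑ i ∈ Finset.Icc 1 n, F i * F (n - i + 1)
          = (∑ i ∈ Finset.Icc 1 (n-1), F i * F (n - i + 1)) + F n := by
        have : Finset.Icc 1 n = insert n (Finset.Icc 1 (n-1)) := by
          ext x; simp only [Finset.mem_insert, Finset.mem_Icc]; omega
        rw [this, Finset.sum_insert (by simp only [Finset.mem_Icc]; omega)]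
        rw [hF1 (n - n + 1) (by omega) (by omega)]
        ring
      rw [hsplit]
      have hterm : ∀ i ∈ Finset.Icc 1 (n-1),
          F i * F (n - i + 1) = F i * F (n - 1 - i + 1)
            + (if i ≤ n - h - 1 then F i * F (n - h - 1 - i + 1) else 0) := by
        intro i hi
        simp only [Finset.mem_Icc] at hi
        rcases le_or_gt (n - i + 1) (h + 1) with hle | hlt
        · have h1 : F (n - i + 1) = 1 := hF1 _ (by omega) hle
          have h2 : F (n - 1 - i + 1) = 1 := hF1 _ (by omega) (by omega)
          have h3 : ¬ i ≤ n - h - 1 := by omega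
          rw [h1, h2, if_neg h3]; ring
        · have h1 : F (n - i + 1) = F (n - i + 1 - 1) + F (n - i + 1 - h - 1) :=
            hFrec _ hlt
          have e1 : n - i + 1 - 1 = n - 1 - i + 1 := by omega
          have e2 : n - i + 1 - h - 1 = n - h - 1 - i + 1 := by omega
          have h3 : i ≤ n - h - 1 := by omega
          rw [h1, e1, e2, if_pos h3]
          ring
      rw [Finset.sum_congr rfl hterm, Finset.sum_add_distrib]
      have hcut : ∑ i ∈ Finset.Icc 1 (n-1),
            (if i ≤ n - h - 1 then F i * F (n - h - 1 - i + 1) else 0)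
          = ∑ i ∈ Finset.Icc 1 (n-h-1), F i * F (n - h - 1 - i + 1) := by
        rw [← Finset.sum_filter]
        congr 1
        ext x
        simp only [Finset.mem_filter, Finset.mem_Icc]
        omega
      rw [hcut]
      ring
end

section
/- For any fixed vertex of the h-th power of a cycle on n vertices with n > 2h, the number of independent k-subsets containing that vertex equals C(n - h*k - 1, k - 1) for k ≥ 1. -/
def gapFam (h N m : ℕ) : Finset (Finset ℕ) :=
  (Finset.Icc 1 N).powerset.filter
    (fun V => (∀ a ∈ V, ∀ b ∈ V, a < b → a + h < b) ∧ V.card = m)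

lemma choose_rec (N m h : ℕ) :
    Nat.choose (N + 1 - m*h) (m+1)
      = Nat.choose (N - m*h) (m+1) + Nat.choose (N - h - (m-1)*h) m := by
  rcases m with _ | j
  · simp
  · have h1 : (j+1)*h = j*h + h := by ring
    have h2 : N - h - (j+1-1)*h = N - (j+1)*h := by
      simp only [Nat.add_sub_cancel]; omega
    rw [h2]
    rcases le_or_gt ((j+1)*h) N with hle | hlt
    · have : N + 1 - (j+1)*h = (N - (j+1)*h) + 1 := by omega
      rw [this, Nat.choose_succ_succ']
      omega
    · have e1 : N + 1 - (j+1)*h = 0 ∨ N + 1 - (j+1)*h = 1 ∧ False := by omega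
      have e2 : N - (j+1)*h = 0 := by omega
      have e3 : N + 1 - (j+1)*h = 0 := by omega
      rw [e2, e3]
      simp

lemma gapFam_card (h : ℕ) : ∀ N m : ℕ, (gapFam h N m).card = Nat.choose (N - (m-1)*h) m := by
  intro N
  induction N using Nat.strong_induction_on with
  | _ N ih =>
    intro m
    rcases m with _ | m
    · -- m = 0 : family is {∅}
      have : gapFam h N 0 = {∅} := by
        ext V
        simp only [gapFam, Finset.mem_filter, Finset.mem_powerset, Finset.mem_singleton,
          Finset.card_eq_zero]
        constructor
        · rintro ⟨-, -, hV⟩; exact hV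
        · rintro rfl; simp
      rw [this]; simp
    · rcases N with _ | N
      · -- N = 0
        have : gapFam h 0 (m+1) = ∅ := by
          ext V
          simp only [gapFam, Finset.mem_filter, Finset.mem_powerset, Finset.notMem_empty,
            iff_false, not_and]
          intro hV _
          have : V = ∅ := by
            rw [← Finset.subset_empty]
            intro x hx
            exact absurd (hV hx) (by simp)
          rw [this]; simp
        rw [this]
        simp
      · -- N+1, m+1
        have hsplit := Finset.card_filter_add_card_filter_not
          (s := gapFam h (N+1) (m+1)) (p := fun V => N+1 ∈ V)
        -- part without N+1 equals gapFam h N (m+1)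
        have hA : (gapFam h (N+1) (m+1)).filter (fun V => ¬ N+1 ∈ V) = gapFam h N (m+1) := by
          ext V
          simp only [gapFam, Finset.mem_filter, Finset.mem_powerset]
          constructor
          · rintro ⟨⟨hsub, hg, hc⟩, hnm⟩
            refine ⟨?_, hg, hc⟩
            intro x hx
            have := hsub hx
            simp only [Finset.mem_Icc] at this ⊢
            have : x ≠ N+1 := fun he => hnm (he ▸ hx)
            omega
          · rintro ⟨hsub, hg, hc⟩
            have hnm : N+1 ∉ V := by
              intro hm
              have := hsub hm
              simp only [Finset.mem_Icc] at this
              omega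
            refine ⟨⟨?_, hg, hc⟩, hnm⟩
            intro x hx
            have := hsub hx
            simp only [Finset.mem_Icc] at this ⊢
            omega
        -- part with N+1 has card of gapFam h (N-h) m
        have hB : ((gapFam h (N+1) (m+1)).filter (fun V => N+1 ∈ V)).card
            = (gapFam h (N-h) m).card := by
          apply Finset.card_bij' (fun V _ => V.erase (N+1)) (fun W _ => insert (N+1) W)
          · rintro V hV
            simp only [gapFam, Finset.mem_filter] at hV
            exact Finset.insert_erase hV.2
          · rintro W hW
            simp only [gapFam, Finset.mem_filter, Finset.mem_powerset] at hW
            apply Finset.erase_insert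
            intro hm
            have := hW.1 hm
            simp only [Finset.mem_Icc] at this
            omega

          · rintro V hV
            simp only [gapFam, Finset.mem_filter, Finset.mem_powerset] at hV ⊢
            obtain ⟨⟨hsub, hg, hc⟩, hmem⟩ := hV
            refine ⟨?_, ?_, ?_⟩
            · intro x hx
              rw [Finset.mem_erase] at hx
              obtain ⟨hne, hxV⟩ := hx
              have h1 := hsub hxV
              simp only [Finset.mem_Icc] at h1 ⊢
              have h2 : x < N+1 := by omega
              have := hg x hxV (N+1) hmem h2
              omega
            · intro a ha b hb hab
              rw [Finset.mem_erase] at ha hb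
              exact hg a ha.2 b hb.2 hab
            · rw [Finset.card_erase_of_mem hmem, hc]; omega
          · rintro W hW
            simp only [gapFam, Finset.mem_filter, Finset.mem_powerset] at hW ⊢
            obtain ⟨hsub, hg, hc⟩ := hW
            have hnm : N+1 ∉ W := by
              intro hm
              have := hsub hm
              simp only [Finset.mem_Icc] at this
              omega
            refine ⟨⟨?_, ?_, ?_⟩, Finset.mem_insert_self _ _⟩
            · intro x hx
              rw [Finset.mem_insert] at hx
              rcases hx with rfl | hx
              · simp only [Finset.mem_Icc]; omega
              · have := hsub hx
                simp only [Finset.mem_Icc] at this ⊢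
                omega
            · intro a ha b hb hab
              rw [Finset.mem_insert] at ha hb
              rcases ha with rfl | ha
              · rcases hb with rfl | hb
                · omega
                · have := hsub hb; simp only [Finset.mem_Icc] at this; omega
              · rcases hb with rfl | hb
                · have := hsub ha; simp only [Finset.mem_Icc] at this; omega
                · exact hg a ha b hb hab
            · rw [Finset.card_insert_of_notMem hnm, hc]
        have hih1 := ih N (by omega) (m+1)
        have hih2 := ih (N-h) (by omega) m
        rw [← hsplit, hB, hA, hih1, hih2]
        simp only [Nat.add_sub_cancel]
        rw [Nat.add_comm]
        exact (choose_rec N m h).symm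


lemma fval (n i x : ℕ) (hx1 : 1 ≤ x) (hx2 : x ≤ n) (hi1 : 1 ≤ i) (hi2 : i ≤ n) :
    (i ≤ x ∧ (x + n - i) % n = x - i) ∨ (x < i ∧ (x + n - i) % n = x + n - i) := by
  rcases le_or_gt i x with hix | hix
  · left
    refine ⟨hix, ?_⟩
    have e : x + n - i = (x - i) + n := by omega
    rw [e, Nat.add_mod_right, Nat.mod_eq_of_lt (by omega)]
  · right
    exact ⟨hix, Nat.mod_eq_of_lt (by omega)⟩

lemma gvalL (n h i v : ℕ) (hn : 2*h < n) (hi1 : 1 ≤ i) (hi2 : i ≤ n)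
    (hv1 : 1 ≤ v) (hv2 : v ≤ n - 2*h - 1) :
    (v + h + i ≤ n ∧ (v + h + i - 1) % n + 1 = v + h + i) ∨
    (n < v + h + i ∧ (v + h + i - 1) % n + 1 = v + h + i - n) := by
  rcases le_or_gt (v+h+i) n with hc | hc
  · left
    refine ⟨hc, ?_⟩
    rw [Nat.mod_eq_of_lt (by omega)]
    omega
  · right
    refine ⟨hc, ?_⟩
    have e : v + h + i - 1 = (v + h + i - 1 - n) + n := by omega
    rw [e, Nat.add_mod_right, Nat.mod_eq_of_lt (by omega)]
    omega

lemma cbnd (n h i x : ℕ) (hn : 2*h < n) (hi1 : 1 ≤ i) (hi2 : i ≤ n) (hx1 : 1 ≤ x) (hx2 : x ≤ n)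
    (hp : (i < x ∧ i + h < x ∧ x + h < n + i) ∨ (x < i ∧ x + h < i ∧ i + h < n + x)) :
    h + 1 ≤ (x + n - i) % n ∧ (x + n - i) % n ≤ n - h - 1 ∧
      ((i ≤ x ∧ (x + n - i) % n = x - i) ∨ (x < i ∧ (x + n - i) % n = x + n - i)) := by
  have hf := fval n i x hx1 hx2 hi1 hi2
  rcases hf with ⟨h1,h2⟩|⟨h1,h2⟩ <;> rcases hp with ⟨p1,p2,p3⟩|⟨p1,p2,p3⟩ <;> omega

theorem stmt14 (n h k i : ℕ) (hn : 2 * h < n) (hk : 1 ≤ k) (hi1 : 1 ≤ i) (hi2 : i ≤ n) :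
    ((cycleSubsets n h).filter (fun S => S.card = k ∧ i ∈ S)).card
      = Nat.choose (n - h * k - 1) (k - 1) := by
  classical
  have key : ((cycleSubsets n h).filter (fun S => S.card = k ∧ i ∈ S)).card
      = (gapFam h (n - 2*h - 1) (k-1)).card := by
    apply Finset.card_bij' (fun S _ => (S.erase i).image (fun x => (x + n - i) % n - h))
      (fun V _ => insert i (V.image (fun v => (v + h + i - 1) % n + 1)))
    · -- left inverse : G (F S) = S
      intro S hS
      simp only [cycleSubsets, Finset.mem_filter, Finset.mem_powerset] at hS
      obtain ⟨⟨hsub, hcyc⟩, hcard, hiS⟩ := hS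
      have hp : ∀ x ∈ S, x ≠ i →
          (i < x ∧ i + h < x ∧ x + h < n + i) ∨ (x < i ∧ x + h < i ∧ i + h < n + x) := by
        intro x hx hne
        rcases lt_trichotomy i x with hlt | heq | hlt
        · exact Or.inl ⟨hlt, hcyc i hiS x hx hlt⟩
        · exact absurd heq.symm hne
        · exact Or.inr ⟨hlt, hcyc x hx i hiS hlt⟩
      rw [Finset.image_image]
      have himg : (S.erase i).image
          ((fun v => (v + h + i - 1) % n + 1) ∘ (fun x => (x + n - i) % n - h)) = S.erase i := by
        rw [Finset.image_congr (g := id) ?_, Finset.image_id]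
        intro x hx
        rw [Finset.mem_coe, Finset.mem_erase] at hx
        obtain ⟨hne, hxS⟩ := hx
        have hxI := hsub hxS
        rw [Finset.mem_Icc] at hxI
        have hb := cbnd n h i x hn hi1 hi2 hxI.1 hxI.2 (hp x hxS hne)
        simp only [Function.comp, id]
        set c := (x + n - i) % n with hc
        have hg := gvalL n h i (c - h) hn hi1 hi2 (by omega) (by omega)
        omega
      rw [himg, Finset.insert_erase hiS]
    · -- right inverse : F (G V) = V
      intro V hV
      simp only [gapFam, Finset.mem_filter, Finset.mem_powerset] at hV
      obtain ⟨hsub, hgap, hcard⟩ := hV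
      have hiW : i ∉ V.image (fun v => (v + h + i - 1) % n + 1) := by
        rw [Finset.mem_image]
        rintro ⟨v, hv, hgv⟩
        have hvI := hsub hv
        rw [Finset.mem_Icc] at hvI
        have hg := gvalL n h i v hn hi1 hi2 hvI.1 hvI.2
        omega
      rw [Finset.erase_insert hiW, Finset.image_image]
      rw [Finset.image_congr (g := id) ?_, Finset.image_id]
      intro v hv
      rw [Finset.mem_coe] at hv
      have hvI := hsub hv
      rw [Finset.mem_Icc] at hvI
      have hg := gvalL n h i v hn hi1 hi2 hvI.1 hvI.2
      simp only [Function.comp, id]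
      set w := (v + h + i - 1) % n + 1 with hw
      have hf := fval n i w (by omega) (by omega) hi1 hi2
      omega
    · -- F S ∈ gapFam
      intro S hS
      simp only [cycleSubsets, Finset.mem_filter, Finset.mem_powerset] at hS
      obtain ⟨⟨hsub, hcyc⟩, hcard, hiS⟩ := hS
      have hp : ∀ x ∈ S, x ≠ i →
          (i < x ∧ i + h < x ∧ x + h < n + i) ∨ (x < i ∧ x + h < i ∧ i + h < n + x) := by
        intro x hx hne
        rcases lt_trichotomy i x with hlt | heq | hlt
        · exact Or.inl ⟨hlt, hcyc i hiS x hx hlt⟩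
        · exact absurd heq.symm hne
        · exact Or.inr ⟨hlt, hcyc x hx i hiS hlt⟩
      have hb : ∀ x ∈ S.erase i, h + 1 ≤ (x + n - i) % n ∧ (x + n - i) % n ≤ n - h - 1 ∧
          ((i ≤ x ∧ (x + n - i) % n = x - i) ∨ (x < i ∧ (x + n - i) % n = x + n - i)) := by
        intro x hx
        rw [Finset.mem_erase] at hx
        obtain ⟨hne, hxS⟩ := hx
        have hxI := hsub hxS
        rw [Finset.mem_Icc] at hxI
        exact cbnd n h i x hn hi1 hi2 hxI.1 hxI.2 (hp x hxS hne)
      simp only [gapFam, Finset.mem_filter, Finset.mem_powerset]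
      refine ⟨?_, ?_, ?_⟩
      · intro y hy
        rw [Finset.mem_image] at hy
        obtain ⟨x, hx, rfl⟩ := hy
        have := hb x hx
        rw [Finset.mem_Icc]
        omega
      · intro a ha b hb' hab
        rw [Finset.mem_image] at ha hb'
        obtain ⟨x1, hx1, rfl⟩ := ha
        obtain ⟨x2, hx2, rfl⟩ := hb'
        have hb1 := hb x1 hx1
        have hb2 := hb x2 hx2
        rw [Finset.mem_erase] at hx1 hx2
        rcases lt_trichotomy x1 x2 with hlt | heq | hlt
        · have := hcyc x1 hx1.2 x2 hx2.2 hlt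
          omega
        · omega
        · have := hcyc x2 hx2.2 x1 hx1.2 hlt
          omega
      · rw [Finset.card_image_of_injOn, Finset.card_erase_of_mem hiS, hcard]
        intro x1 hx1 x2 hx2 hfe
        rw [Finset.mem_coe] at hx1 hx2
        have hb1 := hb x1 hx1
        have hb2 := hb x2 hx2
        have hx1I := hsub (Finset.mem_of_mem_erase hx1)
        have hx2I := hsub (Finset.mem_of_mem_erase hx2)
        rw [Finset.mem_Icc] at hx1I hx2I
        simp only at hfe
        omega
    · -- G V ∈ filtered cycleSubsets
      intro V hV
      simp only [gapFam, Finset.mem_filter, Finset.mem_powerset] at hV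
      obtain ⟨hsub, hgap, hcard⟩ := hV
      have hgv : ∀ v ∈ V, (v + h + i ≤ n ∧ (v + h + i - 1) % n + 1 = v + h + i) ∨
          (n < v + h + i ∧ (v + h + i - 1) % n + 1 = v + h + i - n) := by
        intro v hv
        have hvI := hsub hv
        rw [Finset.mem_Icc] at hvI
        exact gvalL n h i v hn hi1 hi2 hvI.1 hvI.2
      have hiW : i ∉ V.image (fun v => (v + h + i - 1) % n + 1) := by
        rw [Finset.mem_image]
        rintro ⟨v, hv, hgv'⟩
        have := hgv v hv
        have hvI := hsub hv
        rw [Finset.mem_Icc] at hvI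
        omega
      simp only [cycleSubsets, Finset.mem_filter, Finset.mem_powerset]
      refine ⟨⟨?_, ?_⟩, ?_, Finset.mem_insert_self _ _⟩
      · intro y hy
        rw [Finset.mem_insert] at hy
        rw [Finset.mem_Icc]
        rcases hy with rfl | hy
        · omega
        · rw [Finset.mem_image] at hy
          obtain ⟨v, hv, rfl⟩ := hy
          have := hgv v hv
          have hvI := hsub hv
          rw [Finset.mem_Icc] at hvI
          omega
      · intro a ha b hb hab
        rw [Finset.mem_insert] at ha hb
        rcases ha with rfl | ha <;> rcases hb with rfl | hb
        · omega
        · rw [Finset.mem_image] at hb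
          obtain ⟨v, hv, rfl⟩ := hb
          have := hgv v hv
          have hvI := hsub hv
          rw [Finset.mem_Icc] at hvI
          omega
        · rw [Finset.mem_image] at ha
          obtain ⟨u, hu, rfl⟩ := ha
          have := hgv u hu
          have huI := hsub hu
          rw [Finset.mem_Icc] at huI
          omega
        · rw [Finset.mem_image] at ha hb
          obtain ⟨u, hu, rfl⟩ := ha
          obtain ⟨v, hv, rfl⟩ := hb
          have hgu := hgv u hu
          have hgvv := hgv v hv
          have huI := hsub hu
          have hvI := hsub hv
          rw [Finset.mem_Icc] at huI hvI
          rcases lt_trichotomy u v with hlt | heq | hlt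
          · have := hgap u hu v hv hlt
            omega
          · omega
          · have := hgap v hv u hu hlt
            omega
      · rw [Finset.card_insert_of_notMem hiW, Finset.card_image_of_injOn, hcard]
        · omega
        · intro u hu v hv hfe
          rw [Finset.mem_coe] at hu hv
          have hgu := hgv u hu
          have hgvv := hgv v hv
          have huI := hsub hu
          have hvI := hsub hv
          rw [Finset.mem_Icc] at huI hvI
          simp only at hfe
          omega
  rw [key, gapFam_card]
  rcases k with _ | k
  · omega
  · rcases k with _ | j
    · simp
    · simp only [Nat.add_sub_cancel]
      have e2 : h * (j + 1 + 1) = j * h + 2 * h := by ring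
      congr 1
      omega
end

section
/- For n > 2h+1 and k ≥ 1, the identity p(n-2h-1, k-1) + h * p(n-3h-2, k-2) = q(n-h-1, k-1) holds, where p(m, r) counts independent r-subsets of the h-th power of a path on m vertices and q(m, r) counts independent r-subsets of the h-th power of a cycle on m vertices (with the convention p(m,r) = 0 for r ≥ 1 and m < 0, and p(m,0) = 1). -/
/-- `p(m, r)` for integer `m` and `r`: the number of `r`-subsets of `{1,...,max(m,0)}`
with all pairwise differences greater than `h`; zero when `r < 0`. -/
def pcountZ (h : ℕ) (m r : ℤ) : ℕ :=
  ((pathSubsets m.toNat h).filter (fun S => (S.card : ℤ) = r)).card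

theorem stmt18 (n h k : ℕ) (hn : n > 2 * h + 1) (hk : 1 ≤ k) :
    pcountZ h ((n : ℤ) - 2 * h - 1) ((k : ℤ) - 1)
      + h * pcountZ h ((n : ℤ) - 3 * h - 2) ((k : ℤ) - 2)
      = cycleCount (n - h - 1) h (k - 1) := by
  classical
  have ht1 : ((n : ℤ) - 2 * h - 1).toNat = n - 2 * h - 1 := by omega
  have ht2 : ((n : ℤ) - 3 * h - 2).toNat = n - 3 * h - 2 := by omega
  set m := n - h - 1 with hmdef
  unfold pcountZ cycleCount
  rw [ht1, ht2]
  set B₁ := (pathSubsets (n - 2*h - 1) h).filter (fun S => (S.card : ℤ) = (k:ℤ) - 1) with hB1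
  set B₂ := (pathSubsets (n - 3*h - 2) h).filter (fun S => (S.card : ℤ) = (k:ℤ) - 2) with hB2
  set A := (cycleSubsets m h).filter (fun S => S.card = k - 1) with hA
  have hsplit : (A.filter (fun S => ∀ x ∈ S, x ≤ m - h)).card
      + (A.filter (fun S => ¬ ∀ x ∈ S, x ≤ m - h)).card = A.card :=
    Finset.card_filter_add_card_filter_not _
  -- facts about members of A₂
  have memA₂ : ∀ S, S ∈ A.filter (fun S => ¬ ∀ x ∈ S, x ≤ m - h) →
      (∀ x ∈ S, 1 ≤ x ∧ x ≤ m) ∧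
      (∀ i ∈ S, ∀ j ∈ S, i < j → i + h < j ∧ j + h < m + i) ∧
      S.card = k - 1 ∧ S.sup id ∈ S ∧ m - h < S.sup id ∧ (∀ x ∈ S, x ≤ S.sup id) := by
    intro S hS
    rw [Finset.mem_filter, hA, Finset.mem_filter] at hS
    obtain ⟨⟨hmem, hcard⟩, hnot⟩ := hS
    push_neg at hnot
    obtain ⟨x, hxS, hxgt⟩ := hnot
    simp only [cycleSubsets, Finset.mem_filter, Finset.mem_powerset] at hmem
    obtain ⟨hsub, hcyc⟩ := hmem
    have hsub' : ∀ y ∈ S, 1 ≤ y ∧ y ≤ m := by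
      intro y hy; have := hsub hy; rwa [Finset.mem_Icc] at this
    have hne : S.Nonempty := ⟨x, hxS⟩
    obtain ⟨i, hiS, hieq⟩ := Finset.exists_mem_eq_sup S hne id
    have hbmem : S.sup id ∈ S := by rw [hieq]; exact hiS
    have hub : ∀ y ∈ S, y ≤ S.sup id := fun y hy => Finset.le_sup (f := id) hy
    exact ⟨hsub', hcyc, hcard, hbmem, lt_of_lt_of_le hxgt (hub x hxS), hub⟩
  have h1 : A.filter (fun S => ∀ x ∈ S, x ≤ m - h) = B₁ := by
    ext S
    simp only [hA, hB1, Finset.mem_filter, cycleSubsets, pathSubsets,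
      Finset.mem_powerset, Finset.subset_iff, Finset.mem_Icc]
    constructor
    · rintro ⟨⟨⟨hsub, hcyc⟩, hcard⟩, hub⟩
      refine ⟨⟨fun x hx => ?_, fun i hi j hj hij => (hcyc i hi j hj hij).1⟩, by omega⟩
      have := hsub hx; have := hub x hx; omega
    · rintro ⟨⟨hsub, hpath⟩, hcard⟩
      have hub : ∀ x ∈ S, x ≤ m - h := fun x hx => by have := (hsub hx).2; omega
      refine ⟨⟨⟨fun x hx => ?_, fun i hi j hj hij => ⟨hpath i hi j hj hij, ?_⟩⟩, by omega⟩, hub⟩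
      · have := hsub hx; omega
      · have := hsub hi; have := hsub hj; have := hub j hj; omega
  have h2 : (A.filter (fun S => ¬ ∀ x ∈ S, x ≤ m - h)).card = (Finset.range h ×ˢ B₂).card := by
    apply Finset.card_nbij'
      (i := fun S => (m - S.sup id, (S.erase (S.sup id)).image (fun j => j + m - (S.sup id + h))))
      (j := fun p => insert (m - p.1) (p.2.image (fun j => j + (h - p.1))))
    · -- forward well-defined
      intro S hS
      obtain ⟨hsub, hcyc, hcard, hbmem, hbgt, hub⟩ := memA₂ S hS
      have hbm := hsub _ hbmem
      have herase : ∀ j ∈ S.erase (S.sup id), j + h < S.sup id ∧ S.sup id + h < m + j := by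
        intro j hj
        rw [Finset.mem_erase] at hj
        have hjlt : j < S.sup id := lt_of_le_of_ne (hub j hj.2) hj.1
        exact hcyc j hj.2 _ hbmem hjlt
      simp only [Finset.mem_coe, Finset.mem_product, Finset.mem_range, hB2, Finset.mem_filter,
        pathSubsets, Finset.mem_powerset]
      refine ⟨by omega, ⟨?_, ?_⟩, ?_⟩
      · intro y hy
        rw [Finset.mem_image] at hy
        obtain ⟨j, hj, rfl⟩ := hy
        have h1 := herase j hj
        have h2 := hsub j (Finset.mem_of_mem_erase hj)
        rw [Finset.mem_Icc]; omega
      · intro y1 hy1 y2 hy2 hlt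
        rw [Finset.mem_image] at hy1 hy2
        obtain ⟨j1, hj1, rfl⟩ := hy1
        obtain ⟨j2, hj2, rfl⟩ := hy2
        have e1 := herase j1 hj1
        have e2 := herase j2 hj2
        rcases lt_trichotomy j1 j2 with hc | hc | hc
        · have := (hcyc j1 (Finset.mem_of_mem_erase hj1) j2 (Finset.mem_of_mem_erase hj2) hc).1
          omega
        · omega
        · have := (hcyc j2 (Finset.mem_of_mem_erase hj2) j1 (Finset.mem_of_mem_erase hj1) hc).1
          omega
      · rw [Finset.card_image_of_injOn, Finset.card_erase_of_mem hbmem]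
        · have hpos : 1 ≤ S.card := Finset.card_pos.2 ⟨_, hbmem⟩
          omega
        · intro a ha c hc hac
          have e1 := herase a ha
          have e2 := herase c hc
          simp only at hac
          omega
    · -- backward well-defined
      rintro ⟨t, S'⟩ hp
      simp only [Finset.mem_coe, Finset.mem_product, Finset.mem_range, hB2, Finset.mem_filter,
        pathSubsets, Finset.mem_powerset] at hp
      obtain ⟨hth, ⟨hsub, hpath⟩, hcard⟩ := hp
      have hsub' : ∀ y ∈ S', 1 ≤ y ∧ y ≤ n - 3*h - 2 := by
        intro y hy; have := hsub hy; rwa [Finset.mem_Icc] at this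
      have hnotmem : m - t ∉ S'.image (fun j => j + (h - t)) := by
        rw [Finset.mem_image]
        rintro ⟨a, ha, haeq⟩
        have := hsub' a ha; omega
      rw [Finset.mem_coe, Finset.mem_filter, hA, Finset.mem_filter]
      simp only [cycleSubsets, Finset.mem_filter, Finset.mem_powerset]
      refine ⟨⟨⟨?_, ?_⟩, ?_⟩, ?_⟩
      · intro y hy
        rw [Finset.mem_insert] at hy
        rw [Finset.mem_Icc]
        rcases hy with rfl | hy
        · omega
        · rw [Finset.mem_image] at hy
          obtain ⟨a, ha, rfl⟩ := hy
          have := hsub' a ha; omega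
      · intro i hi j hj hij
        rw [Finset.mem_insert] at hi hj
        rcases hi with rfl | hi <;> rcases hj with rfl | hj
        · omega
        · rw [Finset.mem_image] at hj
          obtain ⟨a, ha, rfl⟩ := hj
          have := hsub' a ha; omega
        · rw [Finset.mem_image] at hi
          obtain ⟨a, ha, rfl⟩ := hi
          have := hsub' a ha; omega
        · rw [Finset.mem_image] at hi hj
          obtain ⟨a, ha, rfl⟩ := hi
          obtain ⟨c, hc, rfl⟩ := hj
          have hac : a < c := by omega
          have := hpath a ha c hc hac
          have := hsub' a ha; have := hsub' c hc
          omega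
      · rw [Finset.card_insert_of_notMem hnotmem,
          Finset.card_image_of_injective _ (add_left_injective _)]
        omega
      · push_neg
        exact ⟨m - t, Finset.mem_insert_self _ _, by omega⟩
    · -- left inverse
      intro S hS
      obtain ⟨hsub, hcyc, hcard, hbmem, hbgt, hub⟩ := memA₂ S hS
      have hbm := hsub _ hbmem
      have hbb : m - (m - S.sup id) = S.sup id := by omega
      dsimp only
      rw [hbb, Finset.image_image]
      have hcg : ∀ j ∈ (S.erase (S.sup id) : Finset ℕ),
          ((fun j => j + (h - (m - S.sup id))) ∘ (fun j => j + m - (S.sup id + h))) j = id j := by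
        intro j hj
        rw [Finset.mem_erase] at hj
        have hjlt : j < S.sup id := lt_of_le_of_ne (hub j hj.2) hj.1
        have := hcyc j hj.2 _ hbmem hjlt
        simp only [Function.comp, id]
        omega
      rw [Finset.image_congr hcg, Finset.image_id, Finset.insert_erase hbmem]
    · -- right inverse
      rintro ⟨t, S'⟩ hp
      simp only [Finset.mem_coe, Finset.mem_product, Finset.mem_range, hB2, Finset.mem_filter,
        pathSubsets, Finset.mem_powerset] at hp
      obtain ⟨hth, ⟨hsub, hpath⟩, hcard⟩ := hp
      have hsub' : ∀ y ∈ S', 1 ≤ y ∧ y ≤ n - 3*h - 2 := by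
        intro y hy; have := hsub hy; rwa [Finset.mem_Icc] at this
      have hnotmem : m - t ∉ S'.image (fun j => j + (h - t)) := by
        rw [Finset.mem_image]
        rintro ⟨a, ha, haeq⟩
        have := hsub' a ha; omega
      have hbeq : (insert (m - t) (S'.image (fun j => j + (h - t)))).sup id = m - t := by
        apply le_antisymm
        · apply Finset.sup_le
          intro y hy
          rw [Finset.mem_insert] at hy
          rcases hy with rfl | hy
          · exact le_rfl
          · rw [Finset.mem_image] at hy
            obtain ⟨a, ha, rfl⟩ := hy
            have := hsub' a ha
            simp only [id]; omega
        · exact Finset.le_sup (f := id) (Finset.mem_insert_self _ _)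
      dsimp only
      rw [hbeq, Finset.erase_insert hnotmem, Finset.image_image]
      have hcg : ∀ j ∈ S',
          ((fun j => j + m - (m - t + h)) ∘ (fun j => j + (h - t))) j = id j := by
        intro j hj
        have := hsub' j hj
        simp only [Function.comp, id]
        omega
      rw [Finset.image_congr hcg, Finset.image_id]
      have : m - (m - t) = t := by omega
      rw [this]
  rw [← hsplit, h1, h2, Finset.card_product, Finset.card_range]
end
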